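/- The multi-dimensional assignment distance d_p^{(c,γ)}(X,Y) of Definition 5 is symmetric: d_p^{(c,γ)}(X,Y) = d_p^{(c,γ)}(Y,X) for all finite sets of trajectories X, Y. -/

import Mathlib

open Finset

/-- A trajectory in ℝ^N: a start time `ω`, a length `ν` and a sequence of
states. -/
structure Traj (N : ℕ) where
  ω : ℕ
  ν : ℕ
  x : Fin ν → (Fin N → ℝ)

/-- The (possibly empty) state of the trajectory at time `k`. -/
def tau {N : ℕ} (X : Traj N) (k : ℕ) : Option (Fin N → ℝ) :=
  if h : X.ω ≤ k ∧ k < X.ω + X.ν then some (X.x ⟨k - X.ω, by omega⟩) else none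

/-- Base metric of Definition 1 on at-most-one-element subsets of ℝ^N,
modelled as `Option`. -/
noncomputable def dOpt {N : ℕ} (db : (Fin N → ℝ) → (Fin N → ℝ) → ℝ) (c p : ℝ) :
    Option (Fin N → ℝ) → Option (Fin N → ℝ) → ℝ
  | some x, some y => min c (db x y)
  | none, none => 0
  | _, _ => c / (2 : ℝ) ^ (1 / p)

/-- Switch cost between two (possibly unassigned) assignments. -/
noncomputable def sw {nY : ℕ} : Option (Fin nY) → Option (Fin nY) → ℝ
  | some a, some b => if a = b then 0 else 1
  | none, none => 0
  | _, _ => 1 / 2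

/-- An assignment vector: each trajectory of `X` is assigned at most one
trajectory of `Y`, injectively on assigned values. -/
def validAssign {nX nY : ℕ} (π : Fin nX → Option (Fin nY)) : Prop :=
  ∀ i i' j, π i = some j → π i' = some j → i = i'

/-- Total cost (localization + missed/false + switching) of a sequence of
assignment vectors, Eq. (8). -/
noncomputable def assignCost {N nX nY : ℕ} (db : (Fin N → ℝ) → (Fin N → ℝ) → ℝ)
    (c γ p : ℝ) (T : ℕ) (X : Fin nX → Traj N) (Y : Fin nY → Traj N)
    (π : ℕ → Fin nX → Option (Fin nY)) : ℝ :=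
  (∑ k ∈ Finset.range T,
    ((∑ i, (dOpt db c p (tau (X i) k)
        (Option.bind (π k i) fun j => tau (Y j) k)) ^ p) +
      ∑ j ∈ Finset.univ.filter (fun j : Fin nY => ∀ i, π k i ≠ some j),
        (dOpt db c p none (tau (Y j) k)) ^ p)) +
  γ ^ p * ∑ k ∈ Finset.range (T - 1), ∑ i, sw (π k i) (π (k + 1) i)

/-- The multi-dimensional assignment distance of Definition 5. -/
noncomputable def mdDist {N nX nY : ℕ} (db : (Fin N → ℝ) → (Fin N → ℝ) → ℝ)
    (c γ p : ℝ) (T : ℕ) (X : Fin nX → Traj N) (Y : Fin nY → Traj N) : ℝ :=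
  sInf { v | ∃ π : ℕ → Fin nX → Option (Fin nY),
    (∀ k, validAssign (π k)) ∧ v = (assignCost db c γ p T X Y π) ^ (1 / p) }

-- transpose
noncomputable def transposeAssign {nX nY : ℕ} (π : ℕ → Fin nX → Option (Fin nY)) :
    ℕ → Fin nY → Option (Fin nX) := fun k j =>
  if h : ∃ i, π k i = some j then some h.choose else none

lemma transpose_some {nX nY : ℕ} {π : ℕ → Fin nX → Option (Fin nY)}
    (hπ : ∀ k, validAssign (π k)) (k : ℕ) (i : Fin nX) (j : Fin nY) :
    transposeAssign π k j = some i ↔ π k i = some j := by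
  unfold transposeAssign
  constructor
  · intro h
    split at h
    · rename_i hex
      have : hex.choose = i := Option.some_injective _ h
      rw [← this]; exact hex.choose_spec
    · exact absurd h (by simp)
  · intro h
    have hex : ∃ i, π k i = some j := ⟨i, h⟩
    simp only [dif_pos hex]
    exact congrArg some (hπ k _ _ _ hex.choose_spec h)

lemma transpose_none {nX nY : ℕ} (π : ℕ → Fin nX → Option (Fin nY)) (k : ℕ) (j : Fin nY) :
    transposeAssign π k j = none ↔ ∀ i, π k i ≠ some j := by
  unfold transposeAssign
  split
  · rename_i hex
    simp only [reduceCtorEq, false_iff, not_forall, not_not]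
    exact hex
  · rename_i hex
    simpa using fun i h => hex ⟨i, h⟩

lemma pi_none {nX nY : ℕ} {π : ℕ → Fin nX → Option (Fin nY)}
    (hπ : ∀ k, validAssign (π k)) (k : ℕ) (i : Fin nX) :
    π k i = none ↔ ∀ j, transposeAssign π k j ≠ some i := by
  constructor
  · intro h j hj
    rw [transpose_some hπ] at hj
    rw [h] at hj; exact absurd hj (by simp)
  · intro h
    cases hpi : π k i with
    | none => rfl
    | some j => exact absurd ((transpose_some hπ k i j).mpr hpi) (h j)

lemma dOpt_symm {N : ℕ} {db : (Fin N → ℝ) → (Fin N → ℝ) → ℝ}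
    (hdb_symm : ∀ x y, db x y = db y x) (c p : ℝ)
    (u v : Option (Fin N → ℝ)) : dOpt db c p u v = dOpt db c p v u := by
  cases u <;> cases v <;> simp [dOpt, hdb_symm]

lemma sw_eq {n : ℕ} (a b : Option (Fin n)) :
    sw a b = ∑ x : Fin n, ((if a = some x then (1:ℝ)/2 else 0)
      + (if b = some x then (1:ℝ)/2 else 0)
      - (if a = some x ∧ b = some x then (1:ℝ) else 0)) := by
  cases a with
  | none => cases b with
    | none => simp [sw]
    | some b0 => simp [sw, Finset.sum_ite_eq]
  | some a0 => cases b with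
    | none => simp [sw, Finset.sum_ite_eq]
    | some b0 =>
      simp only [sw, Option.some.injEq, Finset.sum_sub_distrib, Finset.sum_add_distrib]
      rw [Finset.sum_ite_eq, Finset.sum_ite_eq]
      by_cases h : a0 = b0
      · subst h
        simp only [and_self, if_pos rfl]
        norm_num
      · have : ∀ x : Fin n, (if a0 = x ∧ b0 = x then (1:ℝ) else 0) = 0 := by
          intro x; rw [if_neg]; rintro ⟨rfl, rfl⟩; exact h rfl
        simp only [this, Finset.sum_const_zero, if_neg h]
        norm_num

lemma bind_term {N n : ℕ} (db : (Fin N → ℝ) → (Fin N → ℝ) → ℝ) (c p : ℝ)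
    (u : Option (Fin N → ℝ)) (g : Fin n → Option (Fin N → ℝ)) (a : Option (Fin n)) :
    (dOpt db c p u (Option.bind a g)) ^ p
      = (∑ j, if a = some j then (dOpt db c p u (g j)) ^ p else 0)
        + (if a = none then (dOpt db c p u none) ^ p else 0) := by
  cases a with
  | none => simp
  | some j0 => simp [Finset.sum_ite_eq]

lemma transpose_spec {nX nY : ℕ} (π : ℕ → Fin nX → Option (Fin nY)) (k : ℕ)
    (j : Fin nY) (i : Fin nX) (h : transposeAssign π k j = some i) : π k i = some j := by
  unfold transposeAssign at h
  split at h
  · rename_i hex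
    have : hex.choose = i := Option.some_injective _ h
    rw [← this]; exact hex.choose_spec
  · exact absurd h (by simp)

lemma transpose_valid {nX nY : ℕ} (π : ℕ → Fin nX → Option (Fin nY)) (k : ℕ) :
    validAssign (transposeAssign π k) := by
  intro j j' i h h'
  have h1 := transpose_spec π k j i h
  have h2 := transpose_spec π k j' i h'
  rw [h1] at h2
  exact Option.some_injective _ h2

lemma cost_transpose {N nX nY : ℕ} (db : (Fin N → ℝ) → (Fin N → ℝ) → ℝ)
    (c γ p : ℝ) (hdb_symm : ∀ x y, db x y = db y x) (T : ℕ)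
    (X : Fin nX → Traj N) (Y : Fin nY → Traj N)
    (π : ℕ → Fin nX → Option (Fin nY)) (hπ : ∀ k, validAssign (π k)) :
    assignCost db c γ p T Y X (transposeAssign π) = assignCost db c γ p T X Y π := by
  unfold assignCost
  congr 1
  · refine Finset.sum_congr rfl fun k _ => ?_
    have h1 : ∀ j i, (transposeAssign π k j = some i) = (π k i = some j) :=
      fun j i => propext (transpose_some hπ k i j)
    have h2 : ∀ i, (∀ j, transposeAssign π k j ≠ some i) = (π k i = none) :=
      fun i => propext ⟨(pi_none hπ k i).mpr, (pi_none hπ k i).mp⟩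
    have h3 : ∀ j, (∀ i, π k i ≠ some j) = (transposeAssign π k j = none) :=
      fun j => propext (transpose_none π k j).symm
    have h4 : ∀ i j, dOpt db c p (tau (Y j) k) (tau (X i) k)
        = dOpt db c p (tau (X i) k) (tau (Y j) k) := fun i j => dOpt_symm hdb_symm c p _ _
    have h5 : ∀ j, dOpt db c p (tau (Y j) k) none = dOpt db c p none (tau (Y j) k) :=
      fun j => dOpt_symm hdb_symm c p _ _
    have h6 : ∀ i, dOpt db c p none (tau (X i) k) = dOpt db c p (tau (X i) k) none :=
      fun i => dOpt_symm hdb_symm c p _ _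
    simp only [Finset.sum_filter, bind_term, h1, h2, h3, h4, h5, h6,
      Finset.sum_add_distrib]
    rw [Finset.sum_comm]
    ring
  · congr 1
    refine Finset.sum_congr rfl fun k _ => ?_
    have h1 : ∀ j i, (transposeAssign π k j = some i) = (π k i = some j) :=
      fun j i => propext (transpose_some hπ k i j)
    have h1' : ∀ j i, (transposeAssign π (k+1) j = some i) = (π (k+1) i = some j) :=
      fun j i => propext (transpose_some hπ (k+1) i j)
    simp only [sw_eq, h1, h1']
    rw [Finset.sum_comm]

/-- The multi-dimensional assignment distance is symmetric. -/
theorem mdDist_symm {N nX nY : ℕ} (db : (Fin N → ℝ) → (Fin N → ℝ) → ℝ)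
    (c γ p : ℝ) (hc : 0 < c) (hγ : 0 < γ) (hp : 1 ≤ p)
    (hdb_nonneg : ∀ x y, 0 ≤ db x y)
    (hdb_eq : ∀ x y, db x y = 0 ↔ x = y)
    (hdb_symm : ∀ x y, db x y = db y x)
    (hdb_tri : ∀ x y z, db x z ≤ db x y + db y z)
    (T : ℕ) (X : Fin nX → Traj N) (Y : Fin nY → Traj N) :
    mdDist db c γ p T X Y = mdDist db c γ p T Y X := by
  unfold mdDist
  congr 1
  ext v
  simp only [Set.mem_setOf_eq]
  constructor
  · rintro ⟨π, hπ, rfl⟩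
    exact ⟨transposeAssign π, transpose_valid π,
      by rw [cost_transpose db c γ p hdb_symm T X Y π hπ]⟩
  · rintro ⟨σ, hσ, rfl⟩
    exact ⟨transposeAssign σ, transpose_valid σ,
      by rw [cost_transpose db c γ p hdb_symm T Y X σ hσ]⟩
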